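/- Let M, K be symmetric positive definite real m×m matrices, β > 0, A = [[2βM, 0, -M], [0, M, K], [-M, K, 0]], P = [[0, K, 0], [0, M, K], [-M, K, 0]]. If z is a nonzero vector with (2βI + K^{-1}MK^{-1}M)z = λz, then v = (−M^{-1}KM^{-1}Kz; −M^{-1}Kz; z) satisfies A v = λ P v. -/

import Mathlib

open Matrix

/-- A 3×3 block matrix with square m×m blocks. -/
def blk3 {R : Type*} (m : ℕ)
    (A B C D E F G H I : Matrix (Fin m) (Fin m) R) :
    Matrix (Fin m ⊕ (Fin m ⊕ Fin m)) (Fin m ⊕ (Fin m ⊕ Fin m)) R :=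
  Matrix.of <|
    Sum.elim (fun i => Sum.elim (A i) (Sum.elim (B i) (C i)))
      (Sum.elim (fun i => Sum.elim (D i) (Sum.elim (E i) (F i)))
        (fun i => Sum.elim (G i) (Sum.elim (H i) (I i))))

/-- A block vector with three m-blocks. -/
def vec3 {R : Type*} {m : ℕ} (x y z : Fin m → R) : Fin m ⊕ (Fin m ⊕ Fin m) → R :=
  Sum.elim x (Sum.elim y z)

lemma blk3_mulVec {m : ℕ} (A B C D E F G H I : Matrix (Fin m) (Fin m) ℂ)
    (x y z : Fin m → ℂ) :
    (blk3 m A B C D E F G H I) *ᵥ vec3 x y z =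
      vec3 (A *ᵥ x + B *ᵥ y + C *ᵥ z) (D *ᵥ x + E *ᵥ y + F *ᵥ z)
        (G *ᵥ x + H *ᵥ y + I *ᵥ z) := by
  funext i
  rcases i with i | i | i <;>
    · simp [blk3, vec3, mulVec, dotProduct, Fintype.sum_sum_type]; ring

lemma vec3_smul {m : ℕ} (c : ℂ) (x y z : Fin m → ℂ) :
    c • vec3 x y z = vec3 (c • x) (c • y) (c • z) := by
  funext i; rcases i with i | i | i <;> simp [vec3]

lemma vec3_congr {m : ℕ} {x y z x' y' z' : Fin m → ℂ} (hx : x = x') (hy : y = y')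
    (hz : z = z') : vec3 x y z = vec3 x' y' z' := by rw [hx, hy, hz]

theorem stmt_14 {m : ℕ} (M K : Matrix (Fin m) (Fin m) ℝ)
    (hM : M.PosDef) (hK : K.PosDef) (β : ℝ) (hβ : 0 < β)
    (Mc : Matrix (Fin m) (Fin m) ℂ) (hMc : Mc = M.map Complex.ofReal)
    (Kc : Matrix (Fin m) (Fin m) ℂ) (hKc : Kc = K.map Complex.ofReal)
    (A P : Matrix (Fin m ⊕ (Fin m ⊕ Fin m)) (Fin m ⊕ (Fin m ⊕ Fin m)) ℂ)
    (hA : A = blk3 m ((2 * (β : ℂ)) • Mc) 0 (-Mc) 0 Mc Kc (-Mc) Kc 0)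
    (hP : P = blk3 m 0 Kc 0 0 Mc Kc (-Mc) Kc 0)
    (lam : ℂ) (z : Fin m → ℂ) (hz : z ≠ 0)
    (heig : ((2 * (β : ℂ)) • (1 : Matrix (Fin m) (Fin m) ℂ)
        + Kc⁻¹ * Mc * Kc⁻¹ * Mc) *ᵥ z = lam • z)
    (v : Fin m ⊕ (Fin m ⊕ Fin m) → ℂ)
    (hv : v = vec3 (-(Mc⁻¹ *ᵥ (Kc *ᵥ (Mc⁻¹ *ᵥ (Kc *ᵥ z)))))
        (-(Mc⁻¹ *ᵥ (Kc *ᵥ z))) z) :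
    A *ᵥ v = lam • (P *ᵥ v) := by
  have hMdet : Mc.det ≠ 0 := by
    have h : (M.map Complex.ofReal).det = (M.det : ℂ) := by
      exact (RingHom.map_det Complex.ofRealHom M).symm
    rw [hMc, h]
    exact_mod_cast ne_of_gt hM.det_pos
  have hKdet : Kc.det ≠ 0 := by
    have h : (K.map Complex.ofReal).det = (K.det : ℂ) := by
      exact (RingHom.map_det Complex.ofRealHom K).symm
    rw [hKc, h]
    exact_mod_cast ne_of_gt hK.det_pos
  have hMM : Mc * Mc⁻¹ = 1 := mul_nonsing_inv _ (Ne.isUnit hMdet)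
  have hMMi : Mc⁻¹ * Mc = 1 := nonsing_inv_mul _ (Ne.isUnit hMdet)
  have hKK : Kc * Kc⁻¹ = 1 := mul_nonsing_inv _ (Ne.isUnit hKdet)
  have hMv : ∀ w : Fin m → ℂ, Mc *ᵥ (Mc⁻¹ *ᵥ w) = w := fun w => by
    rw [mulVec_mulVec, hMM, one_mulVec]
  -- key identity
  have key : lam • (Kc *ᵥ (Mc⁻¹ *ᵥ (Kc *ᵥ z)))
      = (2 * (β : ℂ)) • (Kc *ᵥ (Mc⁻¹ *ᵥ (Kc *ᵥ z))) + Mc *ᵥ z := by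
    have h1 := congrArg (fun w => Kc *ᵥ (Mc⁻¹ *ᵥ (Kc *ᵥ w))) heig
    simp only [mulVec_smul] at h1
    rw [← h1]
    have h2 : Kc *ᵥ (Mc⁻¹ *ᵥ (Kc *ᵥ (((2 * (β : ℂ)) • (1 : Matrix (Fin m) (Fin m) ℂ)
        + Kc⁻¹ * Mc * Kc⁻¹ * Mc) *ᵥ z)))
        = ((Kc * Mc⁻¹ * Kc) * ((2 * (β : ℂ)) • (1 : Matrix (Fin m) (Fin m) ℂ)
        + Kc⁻¹ * Mc * Kc⁻¹ * Mc)) *ᵥ z := by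
      simp [mulVec_mulVec, Matrix.mul_assoc]
    rw [h2]
    have h3 : (Kc * Mc⁻¹ * Kc) * ((2 * (β : ℂ)) • (1 : Matrix (Fin m) (Fin m) ℂ)
        + Kc⁻¹ * Mc * Kc⁻¹ * Mc)
        = (2 * (β : ℂ)) • (Kc * Mc⁻¹ * Kc) + Mc := by
      rw [Matrix.mul_add, Matrix.mul_smul, Matrix.mul_one]
      congr 1
      calc Kc * Mc⁻¹ * Kc * (Kc⁻¹ * Mc * Kc⁻¹ * Mc)
          = Kc * Mc⁻¹ * ((Kc * Kc⁻¹) * Mc) * Kc⁻¹ * Mc := by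
            simp only [Matrix.mul_assoc]
        _ = Kc * (Kc⁻¹ * Mc) := by rw [hKK, Matrix.one_mul, Matrix.mul_assoc Kc Mc⁻¹ Mc,
              hMMi, Matrix.mul_one, Matrix.mul_assoc]
        _ = Mc := by rw [← Matrix.mul_assoc, hKK, Matrix.one_mul]
    rw [h3, add_mulVec, smul_mulVec]
    simp [mulVec_mulVec, Matrix.mul_assoc]
  subst hA hP hv
  rw [blk3_mulVec, blk3_mulVec, vec3_smul]
  refine vec3_congr ?_ ?_ ?_
  · -- first block
    simp only [zero_mulVec, add_zero, zero_add, neg_mulVec, mulVec_neg, mulVec_smul,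
      smul_mulVec, smul_neg, hMv]
    rw [neg_zero, add_zero, zero_add, smul_neg, ← neg_add, key]
  · have hMKc : Mc * (Mc⁻¹ * Kc) = Kc := by rw [← Matrix.mul_assoc, hMM, Matrix.one_mul]
    simp [mulVec_neg, mulVec_mulVec, hMKc]
  · simp only [neg_mulVec, mulVec_neg, hMv, zero_mulVec, add_zero, smul_zero]
    abel_nf
    simp
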